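/- Let S ≠ T be k-subsets of [n], and let h(S,T) be the multigraph on vertex set [n] whose edge multiset is the union of f(S) and f(T) (viewing pairs (x,y) ∈ ([n]∖[k])×[k] as edges). Then the set of vertices of degree one in h(S,T) is exactly the symmetric difference S Δ T. -/

import Mathlib

def matchF (k : ℕ) (S : Finset ℕ) : Finset (ℕ × ℕ) :=
  (((S \ Finset.Icc 1 k).sort (· ≤ ·)).reverse.zip
    ((Finset.Icc 1 k \ S).sort (· ≤ ·))).toFinset

/-- The degree of vertex `v` in the multigraph `h(S,T)` whose edge multiset is
`f(S) ⊎ f(T)` (each pair `(x,y)` is an edge joining `x` and `y`). -/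
def degH (k : ℕ) (S T : Finset ℕ) (v : ℕ) : ℕ :=
  ((matchF k S).filter fun p => p.1 = v ∨ p.2 = v).card +
  ((matchF k T).filter fun p => p.1 = v ∨ p.2 = v).card

lemma matchF_filter_card (k : ℕ) (S : Finset ℕ) (hScard : S.card = k) (v : ℕ) :
    ((matchF k S).filter fun p => p.1 = v ∨ p.2 = v).card
      = if v ∈ (S \ Finset.Icc 1 k) ∪ (Finset.Icc 1 k \ S) then 1 else 0 := by
  set l1 : List ℕ := ((S \ Finset.Icc 1 k).sort (· ≤ ·)).reverse with hl1
  set l2 : List ℕ := ((Finset.Icc 1 k \ S).sort (· ≤ ·)) with hl2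
  have hlen : l1.length = l2.length := by
    have h1 := Finset.card_sdiff_add_card_inter S (Finset.Icc 1 k)
    have h2 := Finset.card_sdiff_add_card_inter (Finset.Icc 1 k) S
    have h3 : (Finset.Icc 1 k ∩ S).card = (S ∩ Finset.Icc 1 k).card := by
      rw [Finset.inter_comm]
    have hck : (Finset.Icc 1 k).card = k := by simp
    simp only [hl1, hl2, List.length_reverse, Finset.length_sort]
    omega
  have hmapfst : (l1.zip l2).map Prod.fst = l1 := List.map_fst_zip hlen.le
  have hmapsnd : (l1.zip l2).map Prod.snd = l2 := List.map_snd_zip hlen.ge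
  have hl1nodup : l1.Nodup := by
    rw [hl1, List.nodup_reverse]; exact Finset.sort_nodup _ _
  have hl2nodup : l2.Nodup := Finset.sort_nodup _ _
  have hl1set : l1.toFinset = S \ Finset.Icc 1 k := by
    rw [hl1, List.toFinset_reverse, Finset.sort_toFinset]
  have hl2set : l2.toFinset = Finset.Icc 1 k \ S := by
    rw [hl2, Finset.sort_toFinset]
  have hmf : matchF k S = (l1.zip l2).toFinset := rfl
  have himfst : (matchF k S).image Prod.fst = S \ Finset.Icc 1 k := by
    rw [hmf]; ext x
    simp only [Finset.mem_image, List.mem_toFinset]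
    rw [← List.mem_map, hmapfst, ← List.mem_toFinset, hl1set]
  have himsnd : (matchF k S).image Prod.snd = Finset.Icc 1 k \ S := by
    rw [hmf]; ext x
    simp only [Finset.mem_image, List.mem_toFinset]
    rw [← List.mem_map, hmapsnd, ← List.mem_toFinset, hl2set]
  have hmemzip : ∀ p, p ∈ matchF k S ↔ p ∈ l1.zip l2 := by
    intro p; rw [matchF]; exact List.mem_toFinset
  have hinjfst : ∀ p ∈ matchF k S, ∀ q ∈ matchF k S, p.1 = q.1 → p = q := by
    intro p hp q hq hpq
    refine List.inj_on_of_nodup_map ?_ ((hmemzip p).1 hp) ((hmemzip q).1 hq) hpq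
    rw [hmapfst]; exact hl1nodup
  have hinjsnd : ∀ p ∈ matchF k S, ∀ q ∈ matchF k S, p.2 = q.2 → p = q := by
    intro p hp q hq hpq
    refine List.inj_on_of_nodup_map ?_ ((hmemzip p).1 hp) ((hmemzip q).1 hq) hpq
    rw [hmapsnd]; exact hl2nodup
  have hcard1 : ((matchF k S).filter fun p => p.1 = v).card
      = if v ∈ S \ Finset.Icc 1 k then 1 else 0 := by
    have heq : (((matchF k S).filter fun p => p.1 = v).image Prod.fst)
        = ((matchF k S).image Prod.fst).filter (fun y => y = v) :=
      (Finset.filter_image (f := Prod.fst) (p := fun y => y = v) (s := matchF k S)).symm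
    have hinj : ∀ p ∈ (matchF k S).filter fun p => p.1 = v,
        ∀ q ∈ (matchF k S).filter fun p => p.1 = v, p.1 = q.1 → p = q := by
      intro p hp q hq h
      exact hinjfst p (Finset.mem_of_mem_filter p hp) q (Finset.mem_of_mem_filter q hq) h
    rw [← Finset.card_image_of_injOn hinj, heq, himfst, Finset.filter_eq']
    split <;> simp
  have hcard2 : ((matchF k S).filter fun p => p.2 = v).card
      = if v ∈ Finset.Icc 1 k \ S then 1 else 0 := by
    have heq : (((matchF k S).filter fun p => p.2 = v).image Prod.snd)
        = ((matchF k S).image Prod.snd).filter (fun y => y = v) :=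
      (Finset.filter_image (f := Prod.snd) (p := fun y => y = v) (s := matchF k S)).symm
    have hinj : ∀ p ∈ (matchF k S).filter fun p => p.2 = v,
        ∀ q ∈ (matchF k S).filter fun p => p.2 = v, p.2 = q.2 → p = q := by
      intro p hp q hq h
      exact hinjsnd p (Finset.mem_of_mem_filter p hp) q (Finset.mem_of_mem_filter q hq) h
    rw [← Finset.card_image_of_injOn hinj, heq, himsnd, Finset.filter_eq']
    split <;> simp
  have hdisj : Disjoint ((matchF k S).filter fun p => p.1 = v)
      ((matchF k S).filter fun p => p.2 = v) := by
    rw [Finset.disjoint_left]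
    intro p hp1 hp2
    rw [Finset.mem_filter] at hp1 hp2
    have h1 : p.1 ∈ S \ Finset.Icc 1 k := by
      rw [← himfst]; exact Finset.mem_image_of_mem _ hp1.1
    have h2 : p.2 ∈ Finset.Icc 1 k \ S := by
      rw [← himsnd]; exact Finset.mem_image_of_mem _ hp2.1
    rw [hp1.2] at h1
    rw [hp2.2] at h2
    simp only [Finset.mem_sdiff] at h1 h2
    exact h1.2 h2.1
  rw [Finset.filter_or, Finset.card_union_of_disjoint hdisj, hcard1, hcard2]
  have hdisjS : ¬ (v ∈ S \ Finset.Icc 1 k ∧ v ∈ Finset.Icc 1 k \ S) := by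
    simp only [Finset.mem_sdiff]; tauto
  by_cases h1 : v ∈ S \ Finset.Icc 1 k <;> by_cases h2 : v ∈ Finset.Icc 1 k \ S
  · exact absurd ⟨h1, h2⟩ hdisjS
  · simp [Finset.mem_union, h1, h2]
  · simp [Finset.mem_union, h1, h2]
  · simp [Finset.mem_union, h1, h2]

/-- The set of vertices of degree one in `h(S,T)` is exactly `S Δ T`. -/
theorem degree_one_eq_symmDiff (n k : ℕ) (hk : k ≤ n) (S T : Finset ℕ)
    (hSsub : S ⊆ Finset.Icc 1 n) (hTsub : T ⊆ Finset.Icc 1 n)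
    (hScard : S.card = k) (hTcard : T.card = k) (hST : S ≠ T) :
    (Finset.Icc 1 n).filter (fun v => degH k S T v = 1) = (S \ T) ∪ (T \ S) := by
  ext v
  rw [Finset.mem_filter]
  have hnS : v ∈ S → v ∈ Finset.Icc 1 n := fun h => hSsub h
  have hnT : v ∈ T → v ∈ Finset.Icc 1 n := fun h => hTsub h
  simp only [Finset.mem_filter, degH, matchF_filter_card k S hScard v,
    matchF_filter_card k T hTcard v, Finset.mem_union, Finset.mem_sdiff]
  by_cases hvS : v ∈ S <;> by_cases hvT : v ∈ T <;>
    by_cases hvk : v ∈ Finset.Icc 1 k <;> simp_all <;> omega
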